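/- Let 0 < λ₁ < 1 < λ₂ and 0 < s be such that κ := (λ₁^s + λ₂^s)/2 < 1, let (i_n) be i.i.d. uniform on {1,2}, and fix a natural number j. Then there exist constants C > 0 and θ ∈ (κ, 1) such that for all n, ∑_{m=1}^n E[λ_{i_1}⋯λ_{i_m} C(o(m),j) · λ_{i_{m+1}}^s ⋯ λ_{i_n}^s] ≤ C·θⁿ, provided also (λ₁+λ₂)/2 < 1. -/

import Mathlib

open MeasureTheory ProbabilityTheory Finset

lemma my_integrable_dirac {f : ℝ → ℝ} (hf : Measurable f) (a : ℝ) :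
    Integrable f (Measure.dirac a) := by
  refine ⟨hf.aestronglyMeasurable, ?_⟩
  rw [HasFiniteIntegral, lintegral_dirac' a (by measurability)]
  exact ENNReal.coe_lt_top

lemma my_integral_two_point (g : ℝ → ℝ) (hg : Measurable g) (l1 l2 : ℝ) :
    ∫ x, g x ∂((1/2 : ENNReal) • Measure.dirac l1 + (1/2 : ENNReal) • Measure.dirac l2)
      = (g l1 + g l2) / 2 := by
  rw [integral_add_measure ((my_integrable_dirac hg l1).smul_measure (by norm_num))
    ((my_integrable_dirac hg l2).smul_measure (by norm_num)),
    integral_smul_measure, integral_smul_measure,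
    integral_dirac' _ _ hg.stronglyMeasurable, integral_dirac' _ _ hg.stronglyMeasurable]
  have : ((1/2 : ENNReal)).toReal = 1/2 := by norm_num
  rw [this]
  simp only [smul_eq_mul]
  ring

lemma my_indep_prod {Ω : Type*} [MeasurableSpace Ω] {μ : Measure Ω} [IsProbabilityMeasure μ]
    (f : ℕ → Ω → ℝ) (hindep : iIndepFun f μ)
    (hmeas : ∀ i, Measurable (f i)) (hint : ∀ i, Integrable (f i) μ) (S : Finset ℕ) :
    Integrable (fun ω => ∏ i ∈ S, f i ω) μ ∧
      (∫ ω, ∏ i ∈ S, f i ω ∂μ) = ∏ i ∈ S, ∫ ω, f i ω ∂μ := by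
  classical
  induction S using Finset.induction with
  | empty => simp
  | @insert a S ha ih =>
    have hIndep : IndepFun (∏ j ∈ S, f j) (f a) μ :=
      hindep.indepFun_finsetProd_of_notMem hmeas ha
    have hprodInt : Integrable (∏ j ∈ S, f j) μ := by
      have := ih.1
      simpa [Finset.prod_fn] using this
    have hmul : Integrable ((∏ j ∈ S, f j) * f a) μ :=
      hIndep.integrable_mul hprodInt (hint a)
    have hmulint := hIndep.integral_mul_eq_mul_integral hprodInt.aestronglyMeasurable
      (hint a).aestronglyMeasurable
    constructor
    · have : (fun ω => ∏ i ∈ insert a S, f i ω) = (∏ j ∈ S, f j) * f a := by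
        funext ω
        simp [Finset.prod_insert ha, Finset.prod_apply, mul_comm]
      rw [this]
      exact hmul
    · rw [Finset.prod_insert ha, ← ih.2]
      have h1 : (∫ ω, ∏ i ∈ insert a S, f i ω ∂μ) = integral μ ((∏ j ∈ S, f j) * f a) := by
        congr 1
        funext ω
        simp [Finset.prod_insert ha, Finset.prod_apply, mul_comm]
      rw [h1, hmulint]
      have h2 : integral μ (∏ j ∈ S, f j) = ∫ ω, ∏ i ∈ S, f i ω ∂μ := by
        congr 1
        funext ω
        simp [Finset.prod_apply]
      rw [h2]
      ring

/-- For `0 < λ₁ < 1 < λ₂`, `s > 0` with `κ := (λ₁^s + λ₂^s)/2 < 1` and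
`(λ₁+λ₂)/2 < 1`, `(L n)` i.i.d. with values `λ₁, λ₂` of probability `1/2` each,
and a fixed natural `j`, there exist `C > 0` and `θ ∈ (κ, 1)` such that for all
`n`, `∑_{m=1}^n E[λ_{i_1}⋯λ_{i_m}·C(o(m),j)·λ_{i_{m+1}}^s⋯λ_{i_n}^s] ≤ C·θⁿ`. -/
theorem sum_expectation_exponential_decay
    {Ω : Type*} [MeasurableSpace Ω] (μ : Measure Ω) [IsProbabilityMeasure μ]
    (l1 l2 : ℝ) (h0 : 0 < l1) (h1 : l1 < 1) (h2 : 1 < l2)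
    (s : ℝ) (hs : 0 < s) (hκ : (l1 ^ s + l2 ^ s) / 2 < 1)
    (hmean : (l1 + l2) / 2 < 1)
    (L : ℕ → Ω → ℝ) (hmeas : ∀ n, Measurable (L n))
    (hindep : iIndepFun L μ)
    (hdist : ∀ n, Measure.map (L n) μ =
      (1/2 : ENNReal) • Measure.dirac l1 + (1/2 : ENNReal) • Measure.dirac l2)
    (j : ℕ) :
    ∃ C > (0 : ℝ), ∃ θ : ℝ, (l1 ^ s + l2 ^ s) / 2 < θ ∧ θ < 1 ∧
      ∀ n : ℕ,
        ∑ m ∈ Finset.Icc 1 n,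
            ∫ ω, (∏ t ∈ Finset.Icc 1 m, L t ω) *
              ((((Finset.Icc 1 m).filter (fun t => L t ω = l1)).card.choose j : ℝ)) *
              ∏ t ∈ Finset.Icc (m + 1) n, (L t ω) ^ s ∂μ
          ≤ C * θ ^ n := by
  classical
  have hl2 : (0:ℝ) < l2 := lt_trans zero_lt_one h2
  have hl1s : (0:ℝ) < l1 ^ s := Real.rpow_pos_of_pos h0 s
  have hl2s : (0:ℝ) < l2 ^ s := Real.rpow_pos_of_pos hl2 s
  set κ : ℝ := (l1 ^ s + l2 ^ s) / 2 with hκdef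
  set mb : ℝ := (l1 + l2) / 2 with hmbdef
  have hκ0 : 0 < κ := by positivity
  have hmb0 : 0 < mb := by positivity
  set b : ℝ := max mb κ with hbdef
  have hb0 : 0 < b := lt_max_of_lt_left hmb0
  have hb1 : b < 1 := max_lt hmean hκ
  set θ : ℝ := (b + 1) / 2 with hθdef
  have hbθ : b < θ := by rw [hθdef]; linarith
  have hθ1 : θ < 1 := by rw [hθdef]; linarith
  have hθ0 : 0 < θ := lt_trans hb0 hbθ
  -- constant from the polynomial-geometric bound
  have hrnorm : ‖b / θ‖ < 1 := by
    rw [Real.norm_eq_abs, abs_of_nonneg (by positivity)]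
    rw [div_lt_one hθ0]
    exact hbθ
  obtain ⟨C₀, hC₀⟩ :=
    (summable_pow_mul_geometric_of_norm_lt_one (j + 1) hrnorm).tendsto_atTop_zero.bddAbove_range
  refine ⟨max C₀ 1, lt_of_lt_of_le zero_lt_one (le_max_right _ _), θ,
    lt_of_le_of_lt (le_max_right mb κ) hbθ, hθ1, ?_⟩
  -- a.e. the values are l1 or l2
  have hA : ∀ᵐ ω ∂μ, ∀ t, L t ω = l1 ∨ L t ω = l2 := by
    rw [ae_all_iff]
    intro t
    have hset : MeasurableSet ({l1, l2} : Set ℝ) :=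
      (measurableSet_singleton l2).insert l1
    have hmap : μ (L t ⁻¹' ({l1, l2}ᶜ : Set ℝ)) = 0 := by
      rw [← Measure.map_apply (hmeas t) hset.compl, hdist t]
      rw [Measure.add_apply, Measure.smul_apply, Measure.smul_apply,
        Measure.dirac_apply' _ hset.compl, Measure.dirac_apply' _ hset.compl]
      simp [Set.indicator_of_notMem]
    have : {ω | ¬(L t ω = l1 ∨ L t ω = l2)} = L t ⁻¹' ({l1, l2}ᶜ : Set ℝ) := by
      ext ω
      simp [not_or]
    rw [ae_iff, this]
    exact hmap
  -- single-variable integrals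
  have hIL : ∀ t, ∫ ω, L t ω ∂μ = mb := by
    intro t
    calc ∫ ω, L t ω ∂μ
        = ∫ x, x ∂(Measure.map (L t) μ) :=
          (integral_map (hmeas t).aemeasurable measurable_id.aestronglyMeasurable).symm
      _ = mb := by
          rw [hdist t]
          simpa using my_integral_two_point (fun x => x) measurable_id l1 l2
  have hrpow_meas : Measurable (fun x : ℝ => x ^ s) :=
    (Real.continuous_rpow_const hs.le).measurable
  have hIS : ∀ t, ∫ ω, (L t ω) ^ s ∂μ = κ := by
    intro t
    calc ∫ ω, (L t ω) ^ s ∂μ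
        = ∫ x, x ^ s ∂(Measure.map (L t) μ) :=
          (integral_map (hmeas t).aemeasurable hrpow_meas.aestronglyMeasurable).symm
      _ = κ := by
          rw [hdist t]
          simpa using my_integral_two_point (fun x => x ^ s) hrpow_meas l1 l2
  -- integrability
  set B : ℝ := max l2 (l2 ^ s) with hBdef
  have habs : ∀ (x : ℝ), x = l1 ∨ x = l2 → ‖x‖ ≤ B ∧ ‖x ^ s‖ ≤ B := by
    rintro x (rfl | rfl)
    · constructor
      · rw [Real.norm_eq_abs, abs_of_pos h0]
        exact le_trans h1.le (le_trans h2.le (le_max_left _ _))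
      · rw [Real.norm_eq_abs, abs_of_pos hl1s]
        exact le_trans (Real.rpow_le_rpow h0.le (le_trans h1.le h2.le) hs.le)
          (le_max_right _ _)
    · constructor
      · rw [Real.norm_eq_abs, abs_of_pos hl2]
        exact le_max_left _ _
      · rw [Real.norm_eq_abs, abs_of_pos hl2s]
        exact le_max_right _ _
  have hintL : ∀ t, Integrable (L t) μ := by
    intro t
    refine Integrable.mono' (integrable_const B) (hmeas t).aestronglyMeasurable ?_
    filter_upwards [hA] with ω hω
    exact (habs _ (hω t)).1
  have hintS : ∀ t, Integrable (fun ω => (L t ω) ^ s) μ := by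
    intro t
    refine Integrable.mono' (integrable_const B)
      (hrpow_meas.comp (hmeas t)).aestronglyMeasurable ?_
    filter_upwards [hA] with ω hω
    exact (habs _ (hω t)).2
  intro n
  -- the per-m bound
  have key2 : ∀ m ∈ Finset.Icc 1 n,
      (∫ ω, (∏ t ∈ Finset.Icc 1 m, L t ω) *
          ((((Finset.Icc 1 m).filter (fun t => L t ω = l1)).card.choose j : ℝ)) *
          ∏ t ∈ Finset.Icc (m + 1) n, (L t ω) ^ s ∂μ)
        ≤ (m.choose j : ℝ) * mb ^ m * κ ^ (n - m) := by
    intro m hm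
    rw [Finset.mem_Icc] at hm
    obtain ⟨hm1, hmn⟩ := hm
    set g : ℕ → ℝ → ℝ := fun t x => if t ≤ m then x else x ^ s with hgdef
    have hgmeas : ∀ t, Measurable (g t) := by
      intro t
      by_cases h : t ≤ m
      · simpa [hgdef, h] using measurable_id'
      · simpa [hgdef, h] using hrpow_meas
    set Y : ℕ → Ω → ℝ := fun t => g t ∘ L t with hYdef
    have hYindep : iIndepFun Y μ := hindep.comp g hgmeas
    have hYmeas : ∀ t, Measurable (Y t) := fun t => (hgmeas t).comp (hmeas t)
    have hYint : ∀ t, Integrable (Y t) μ := by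
      intro t
      by_cases h : t ≤ m
      · simpa [hYdef, hgdef, h, Function.comp_def] using hintL t
      · simpa [hYdef, hgdef, h, Function.comp_def] using hintS t
    obtain ⟨hPint, hPval⟩ := my_indep_prod Y hYindep hYmeas hYint (Finset.Icc 1 n)
    -- splitting of products over Icc 1 n
    have hsplit : ∀ (v : ℕ → ℝ),
        (∏ t ∈ Finset.Icc 1 m, v t) * (∏ t ∈ Finset.Icc (m+1) n, v t)
          = ∏ t ∈ Finset.Icc 1 n, v t := by
      intro v
      have h := Finset.prod_Ioc_consecutive v (Nat.zero_le m) hmn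
      simpa [← Finset.Icc_add_one_left_eq_Ioc] using h
    -- on the good set, pointwise identification and bound
    have hprodY : ∀ ω, (∏ t ∈ Finset.Icc 1 m, L t ω) *
        (∏ t ∈ Finset.Icc (m+1) n, (L t ω) ^ s) = ∏ t ∈ Finset.Icc 1 n, Y t ω := by
      intro ω
      have h1 : ∏ t ∈ Finset.Icc 1 m, L t ω = ∏ t ∈ Finset.Icc 1 m, Y t ω := by
        refine Finset.prod_congr rfl fun t ht => ?_
        rw [Finset.mem_Icc] at ht
        simp [hYdef, hgdef, ht.2, Function.comp]
      have h2 : ∏ t ∈ Finset.Icc (m+1) n, (L t ω) ^ s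
          = ∏ t ∈ Finset.Icc (m+1) n, Y t ω := by
        refine Finset.prod_congr rfl fun t ht => ?_
        rw [Finset.mem_Icc] at ht
        have : ¬ t ≤ m := by omega
        simp [hYdef, hgdef, this, Function.comp]
      rw [h1, h2, hsplit]
    have hle : (∫ ω, (∏ t ∈ Finset.Icc 1 m, L t ω) *
          ((((Finset.Icc 1 m).filter (fun t => L t ω = l1)).card.choose j : ℝ)) *
          ∏ t ∈ Finset.Icc (m + 1) n, (L t ω) ^ s ∂μ)
        ≤ ∫ ω, (m.choose j : ℝ) * ∏ t ∈ Finset.Icc 1 n, Y t ω ∂μ := by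
      refine integral_mono_of_nonneg ?_ (hPint.const_mul _) ?_
      · filter_upwards [hA] with ω hω
        have hL : ∀ t, 0 < L t ω := by
          intro t
          rcases hω t with h | h <;> rw [h]
          · exact h0
          · exact hl2
        have hP1 : 0 ≤ ∏ t ∈ Finset.Icc 1 m, L t ω :=
          Finset.prod_nonneg fun t _ => (hL t).le
        have hP2 : 0 ≤ ∏ t ∈ Finset.Icc (m+1) n, (L t ω) ^ s :=
          Finset.prod_nonneg fun t _ => (Real.rpow_pos_of_pos (hL t) s).le
        have hc : (0:ℝ) ≤ (((Finset.Icc 1 m).filter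
            (fun t => L t ω = l1)).card.choose j : ℝ) := Nat.cast_nonneg _
        positivity
      · filter_upwards [hA] with ω hω
        have hL : ∀ t, 0 < L t ω := by
          intro t
          rcases hω t with h | h <;> rw [h]
          · exact h0
          · exact hl2
        have hP1 : 0 ≤ ∏ t ∈ Finset.Icc 1 m, L t ω :=
          Finset.prod_nonneg fun t _ => (hL t).le
        have hP2 : 0 ≤ ∏ t ∈ Finset.Icc (m+1) n, (L t ω) ^ s :=
          Finset.prod_nonneg fun t _ => (Real.rpow_pos_of_pos (hL t) s).le
        have hcle : ((((Finset.Icc 1 m).filter (fun t => L t ω = l1)).card.choose j : ℝ))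
            ≤ (m.choose j : ℝ) := by
          have h1 : ((Finset.Icc 1 m).filter (fun t => L t ω = l1)).card
              ≤ (Finset.Icc 1 m).card := Finset.card_filter_le _ _
          have h2 : (Finset.Icc 1 m).card = m := by
            rw [Nat.card_Icc]; omega
          exact_mod_cast Nat.choose_le_choose j (by omega)
        calc (∏ t ∈ Finset.Icc 1 m, L t ω) *
              ((((Finset.Icc 1 m).filter (fun t => L t ω = l1)).card.choose j : ℝ)) *
              ∏ t ∈ Finset.Icc (m + 1) n, (L t ω) ^ s
            = ((((Finset.Icc 1 m).filter (fun t => L t ω = l1)).card.choose j : ℝ)) *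
              ((∏ t ∈ Finset.Icc 1 m, L t ω) *
                ∏ t ∈ Finset.Icc (m + 1) n, (L t ω) ^ s) := by ring
          _ ≤ (m.choose j : ℝ) * ((∏ t ∈ Finset.Icc 1 m, L t ω) *
                ∏ t ∈ Finset.Icc (m + 1) n, (L t ω) ^ s) :=
              mul_le_mul_of_nonneg_right hcle (mul_nonneg hP1 hP2)
          _ = (m.choose j : ℝ) * ∏ t ∈ Finset.Icc 1 n, Y t ω := by rw [hprodY ω]
    refine le_trans hle ?_
    rw [integral_const_mul, hPval]
    have hval : (∏ t ∈ Finset.Icc 1 n, ∫ ω, Y t ω ∂μ) = mb ^ m * κ ^ (n - m) := by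
      rw [← hsplit (fun t => ∫ ω, Y t ω ∂μ)]
      have h1 : ∏ t ∈ Finset.Icc 1 m, (∫ ω, Y t ω ∂μ) = mb ^ m := by
        rw [Finset.prod_congr rfl (fun t ht => ?_), Finset.prod_const, Nat.card_Icc]
        · congr 1 <;> omega
        · rw [Finset.mem_Icc] at ht
          have h : (fun ω => Y t ω) = L t := by
            funext ω; simp [hYdef, hgdef, ht.2, Function.comp]
          rw [show (∫ ω, Y t ω ∂μ) = ∫ ω, L t ω ∂μ by rw [h], hIL t]
      have h2 : ∏ t ∈ Finset.Icc (m+1) n, (∫ ω, Y t ω ∂μ) = κ ^ (n - m) := by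
        rw [Finset.prod_congr rfl (fun t ht => ?_), Finset.prod_const, Nat.card_Icc]
        · congr 1 <;> omega
        · rw [Finset.mem_Icc] at ht
          have hnle : ¬ t ≤ m := by omega
          have h : (fun ω => Y t ω) = fun ω => (L t ω) ^ s := by
            funext ω; simp [hYdef, hgdef, hnle, Function.comp]
          rw [show (∫ ω, Y t ω ∂μ) = ∫ ω, (L t ω) ^ s ∂μ by rw [h], hIS t]
      rw [h1, h2]
    rw [hval, mul_assoc]
  -- summing up
  calc ∑ m ∈ Finset.Icc 1 n,
        ∫ ω, (∏ t ∈ Finset.Icc 1 m, L t ω) *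
          ((((Finset.Icc 1 m).filter (fun t => L t ω = l1)).card.choose j : ℝ)) *
          ∏ t ∈ Finset.Icc (m + 1) n, (L t ω) ^ s ∂μ
      ≤ ∑ m ∈ Finset.Icc 1 n, (m.choose j : ℝ) * mb ^ m * κ ^ (n - m) :=
        Finset.sum_le_sum key2
    _ ≤ ∑ m ∈ Finset.Icc 1 n, (n:ℝ)^j * b^n := by
        refine Finset.sum_le_sum fun m hm => ?_
        rw [Finset.mem_Icc] at hm
        have hc : (m.choose j : ℝ) ≤ (n:ℝ)^j := by
          have := le_trans (Nat.choose_le_pow m j) (Nat.pow_le_pow_left hm.2 j)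
          exact_mod_cast this
        have hpow : mb ^ m * κ ^ (n - m) ≤ b ^ n := by
          calc mb ^ m * κ ^ (n - m)
              ≤ b ^ m * b ^ (n - m) :=
                mul_le_mul (pow_le_pow_left₀ hmb0.le (le_max_left _ _) m)
                  (pow_le_pow_left₀ hκ0.le (le_max_right _ _) (n - m))
                  (pow_nonneg hκ0.le _) (pow_nonneg hb0.le _)
            _ = b ^ n := by rw [← pow_add]; congr 1; omega
        calc (m.choose j : ℝ) * mb ^ m * κ ^ (n - m)
            = (m.choose j : ℝ) * (mb ^ m * κ ^ (n - m)) := by ring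
          _ ≤ (n:ℝ)^j * b^n :=
              mul_le_mul hc hpow (by positivity) (by positivity)
    _ ≤ (n:ℝ)^(j+1) * b^n := by
        rw [Finset.sum_const, Nat.card_Icc, nsmul_eq_mul]
        have : ((n + 1 - 1 : ℕ) : ℝ) = (n : ℝ) := by norm_num
        rw [this, pow_succ]
        nlinarith [pow_nonneg hb0.le n, pow_nonneg (Nat.cast_nonneg (α := ℝ) n) j,
          Nat.cast_nonneg (α := ℝ) n]
    _ = ((n:ℝ)^(j+1) * (b/θ)^n) * θ^n := by
        rw [mul_assoc, ← mul_pow, div_mul_cancel₀ _ (ne_of_gt hθ0)]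
    _ ≤ max C₀ 1 * θ^n := by
        refine mul_le_mul_of_nonneg_right ?_ (pow_nonneg hθ0.le n)
        exact le_trans (hC₀ (Set.mem_range_self n)) (le_max_left _ _)
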